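/- Let T = (V_T, E_T) be a tree with root r and let Q ⊆ E(T) ∪ E(T)^(2), with S = {shore(f) : f ∈ Q}. Suppose each vertex u receives the key value k_u = ℓ_0 + Σ_{f ∈ Q : u ∈ shore(f)} ℓ_f (mod M), where ℓ_0 and the ℓ_f are independent uniform random elements of Z_M. Then: (a) if u and v lie in the same atom of atoms(S), then k_u = k_v with probability 1; (b) if u and v lie in different atoms, then Pr[k_u = k_v] = 1/M; and (c) by a union bound, with probability at least 1 − C(n,2)/M, the partition of V by equal key values equals atoms(S), where n = |V_T|. -/

import Mathlib

/-- `u` and `v` lie in the same atom of the family `T` of subsets of `V`. -/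
def sameAtom {V : Type*} (T : Set (Set V)) (u v : V) : Prop :=
  ∀ X ∈ T, (u ∈ X ↔ v ∈ X)

/-- `Δ_T(X)`: the set of edges of the graph `T` with exactly one endpoint in `X`. -/
def cutEdges {V : Type*} (T : SimpleGraph V) (X : Set V) : Set (Sym2 V) :=
  {e | e ∈ T.edgeSet ∧ ∃ a b, e = s(a, b) ∧ a ∈ X ∧ b ∉ X}

/-- Counting solutions of an affine equation with a coefficient squaring to 1. -/
lemma count_fiber {M : ℕ} [NeZero M] {ι : Type*} [Fintype ι] (e : ι → ZMod M) (i : ι)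
    (he : e i * e i = 1) :
    Set.ncard {p : ZMod M × (ι → ZMod M) | ∑ f, e f * p.2 f = 0} * M =
      Nat.card (ZMod M × (ι → ZMod M)) := by
  classical
  set φ : ZMod M × (ι → ZMod M) → ZMod M := fun p => ∑ f, e f * p.2 f with hφ
  have hsum : ∀ (g : ι → ZMod M) (x : ZMod M),
      ∑ f, e f * Function.update g i x f = e i * x + ∑ f ∈ Finset.univ \ {i}, e f * g f := by
    intro g x
    have h1 : (fun f => e f * Function.update g i x f)
        = Function.update (fun f => e f * g f) i (e i * x) := by
      funext f
      by_cases h : f = i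
      · subst h; simp
      · simp [Function.update_of_ne h]
    rw [h1, Finset.sum_update_of_mem (Finset.mem_univ i)]
  have hupdate : ∀ (p : ZMod M × (ι → ZMod M)) (d : ZMod M),
      φ (p.1, Function.update p.2 i (p.2 i + d)) = φ p + e i * d := by
    intro p d
    simp only [hφ]
    rw [hsum]
    conv_rhs => rw [← Function.update_eq_self i p.2]
    rw [hsum]
    ring
  -- fibers of φ all have the same cardinality
  set F : ZMod M → Finset (ZMod M × (ι → ZMod M)) :=
    fun c => Finset.univ.filter (fun p => φ p = c) with hF
  have hcard : ∀ c, (F c).card = (F 0).card := by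
    intro c
    apply Finset.card_nbij'
      (i := fun p => (p.1, Function.update p.2 i (p.2 i + e i * (-c))))
      (j := fun p => (p.1, Function.update p.2 i (p.2 i + e i * c)))
    · intro p hp
      simp only [hF, Finset.mem_coe, Finset.mem_filter, Finset.mem_univ, true_and] at hp ⊢
      rw [hupdate, hp]
      rw [← mul_assoc, he]
      ring
    · intro p hp
      simp only [hF, Finset.mem_coe, Finset.mem_filter, Finset.mem_univ, true_and] at hp ⊢
      rw [hupdate, hp]
      rw [← mul_assoc, he]
      ring
    · intro p hp
      obtain ⟨a, g⟩ := p
      simp only [Prod.mk.injEq, true_and]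
      funext f
      by_cases h : f = i
      · subst h
        simp only [Function.update_self]
        ring
      · simp [Function.update_of_ne h]
    · intro p hp
      obtain ⟨a, g⟩ := p
      simp only [Prod.mk.injEq, true_and]
      funext f
      by_cases h : f = i
      · subst h
        simp only [Function.update_self]
        ring
      · simp [Function.update_of_ne h]
  have htotal : Fintype.card (ZMod M × (ι → ZMod M)) = ∑ c : ZMod M, (F c).card := by
    rw [← Finset.card_univ]
    exact Finset.card_eq_sum_card_fiberwise (fun p _ => Finset.mem_univ (φ p))
  have hset : {p : ZMod M × (ι → ZMod M) | ∑ f, e f * p.2 f = 0}.ncard = (F 0).card := by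
    rw [Set.ncard_eq_toFinset_card']
    congr 1
    ext p
    simp [hF, hφ]
  rw [hset, Nat.card_eq_fintype_card, htotal]
  rw [Finset.sum_congr rfl (fun c _ => hcard c)]
  simp [Finset.card_univ, ZMod.card, mul_comm]

open Classical in
theorem stmt_14 {V : Type*} [Fintype V] {ι : Type*} [Fintype ι]
    (M : ℕ) (hM : 0 < M) [NeZero M]
    -- a tree `T` with root `r`, and `Q` a family (indexed by `ι`) of edge sets
    -- `f ∈ E(T) ∪ E(T)^(2)`, with `sh i = shore(q i)` the shore not containing `r`
    (T : SimpleGraph V) (hT : T.IsTree) (r : V)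
    (q : ι → Set (Sym2 V))
    (hq : ∀ i : ι, q i ⊆ T.edgeSet ∧ ((q i).ncard = 1 ∨ (q i).ncard = 2))
    (sh : ι → Set V)
    (hsh : ∀ i : ι, r ∉ sh i ∧ cutEdges T (sh i) = q i)
    -- the key of `u` for random seeds `p = (ℓ₀, ℓ)` is `ℓ₀ + Σ_{f : u ∈ shore(f)} ℓ_f`
    (key : ZMod M × (ι → ZMod M) → V → ZMod M)
    (hkey : ∀ p u, key p u = p.1 + ∑ f : ι, if u ∈ sh f then p.2 f else 0) :
    -- (a) vertices in the same atom always get equal keys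
    (∀ u v : V, sameAtom (Set.range sh) u v →
      ∀ p : ZMod M × (ι → ZMod M), key p u = key p v) ∧
    -- (b) vertices in different atoms collide with probability exactly `1/M`
    (∀ u v : V, ¬ sameAtom (Set.range sh) u v →
      Set.ncard {p : ZMod M × (ι → ZMod M) | key p u = key p v} * M =
        Nat.card (ZMod M × (ι → ZMod M))) ∧
    -- (c) with probability at least `1 − C(n,2)/M` the equal-key partition is `atoms(S)`
    ((1 - ((Fintype.card V).choose 2 : ℝ) / M) *
        (Nat.card (ZMod M × (ι → ZMod M)) : ℝ) ≤
      (Set.ncard {p : ZMod M × (ι → ZMod M) |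
        ∀ u v : V, key p u = key p v ↔ sameAtom (Set.range sh) u v} : ℝ)) := by
  have ha : ∀ u v : V, sameAtom (Set.range sh) u v →
      ∀ p : ZMod M × (ι → ZMod M), key p u = key p v := by
    intro u v h p
    rw [hkey, hkey]
    congr 1
    refine Finset.sum_congr rfl fun f _ => ?_
    have := h (sh f) ⟨f, rfl⟩
    by_cases hu : u ∈ sh f
    · simp [hu, this.mp hu]
    · have hv : v ∉ sh f := fun hv => hu (this.mpr hv)
      simp [hu, hv]
  have hb : ∀ u v : V, ¬ sameAtom (Set.range sh) u v →
      Set.ncard {p : ZMod M × (ι → ZMod M) | key p u = key p v} * M =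
        Nat.card (ZMod M × (ι → ZMod M)) := by
    intro u v h
    simp only [sameAtom, not_forall] at h
    obtain ⟨X, hX, hiff⟩ := h
    obtain ⟨i, rfl⟩ := hX
    set e : ι → ZMod M := fun f =>
      (if u ∈ sh f then (1 : ZMod M) else 0) - (if v ∈ sh f then 1 else 0) with he
    have hei : e i * e i = 1 := by
      simp only [he]
      by_cases hu : u ∈ sh i <;> by_cases hv : v ∈ sh i
      · exact absurd (iff_of_true hu hv) hiff
      · simp [hu, hv]
      · simp [hu, hv]
      · exact absurd (iff_of_false hu hv) hiff
    have hset : {p : ZMod M × (ι → ZMod M) | key p u = key p v}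
        = {p : ZMod M × (ι → ZMod M) | ∑ f, e f * p.2 f = 0} := by
      ext p
      simp only [Set.mem_setOf_eq, hkey, add_right_inj]
      rw [← sub_eq_zero, ← Finset.sum_sub_distrib]
      have hterm : (∑ f, ((if u ∈ sh f then p.2 f else 0) - (if v ∈ sh f then p.2 f else 0)))
          = ∑ f, e f * p.2 f :=
        Finset.sum_congr rfl fun f _ => by
          simp only [he]; split_ifs <;> ring
      rw [hterm]
    rw [hset]
    exact count_fiber e i hei
  refine ⟨ha, hb, ?_⟩
  -- part (c)
  classical
  have hsymm : ∀ u v : V, ({p : ZMod M × (ι → ZMod M) | ¬ sameAtom (Set.range sh) u v ∧ key p u = key p v} : Set (ZMod M × (ι → ZMod M)))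
      = {p : ZMod M × (ι → ZMod M) | ¬ sameAtom (Set.range sh) v u ∧ key p v = key p u} := by
    intro u v
    ext p
    simp only [Set.mem_setOf_eq, sameAtom]
    constructor
    · rintro ⟨h1, h2⟩
      exact ⟨fun hc => h1 fun X hX => (hc X hX).symm, h2.symm⟩
    · rintro ⟨h1, h2⟩
      exact ⟨fun hc => h1 fun X hX => (hc X hX).symm, h2.symm⟩
  set B : Sym2 V → Set (ZMod M × (ι → ZMod M)) := Sym2.lift
    ⟨fun u v => {p : ZMod M × (ι → ZMod M) | ¬ sameAtom (Set.range sh) u v ∧ key p u = key p v},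
      fun u v => hsymm u v⟩ with hB
  have hBmk : ∀ u v, B s(u, v) = {p : ZMod M × (ι → ZMod M) | ¬ sameAtom (Set.range sh) u v ∧ key p u = key p v} :=
    fun u v => rfl
  have hBcard : ∀ z : Sym2 V, (B z).ncard * M ≤ Nat.card (ZMod M × (ι → ZMod M)) := by
    intro z
    induction z using Sym2.ind with
    | _ u v =>
      by_cases h : sameAtom (Set.range sh) u v
      · have : B s(u, v) = ∅ := by
          rw [hBmk]; ext p; simp [h]
        simp [this]
      · have : B s(u, v) = {p : ZMod M × (ι → ZMod M) | key p u = key p v} := by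
          rw [hBmk]; ext p; simp [h]
        rw [this, hb u v h]
  have hBdiag : ∀ z : Sym2 V, z.IsDiag → B z = ∅ := by
    intro z hz
    induction z using Sym2.ind with
    | _ u v =>
      rw [Sym2.mk_isDiag_iff] at hz
      subst hz
      rw [hBmk]
      ext p
      simp only [Set.mem_setOf_eq, Set.mem_empty_iff_false, iff_false, not_and]
      intro hc
      exact absurd (fun X _ => Iff.rfl) hc
  set Bad : Set (ZMod M × (ι → ZMod M)) := ⋃ z : Sym2 V, B z with hBad
  have hGood : {p : ZMod M × (ι → ZMod M) | ∀ u v : V, key p u = key p v ↔ sameAtom (Set.range sh) u v} = Badᶜ := by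
    ext p
    simp only [Set.mem_setOf_eq, Set.mem_compl_iff, hBad, Set.mem_iUnion, not_exists]
    constructor
    · intro h z
      induction z using Sym2.ind with
      | _ u v =>
        rw [hBmk]
        rintro ⟨h1, h2⟩
        exact h1 ((h u v).mp h2)
    · intro h u v
      refine ⟨fun hk => ?_, fun hs => ha u v hs p⟩
      by_contra hc
      exact h s(u, v) ⟨hc, hk⟩
  -- union bound
  have hBadle : Bad.ncard ≤ ∑ z : Sym2 V, (B z).ncard := by
    have hsub : Bad.toFinset ⊆ Finset.univ.biUnion (fun z : Sym2 V => (B z).toFinset) := by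
      intro p hp
      rw [Set.mem_toFinset, hBad, Set.mem_iUnion] at hp
      obtain ⟨z, hz⟩ := hp
      exact Finset.mem_biUnion.mpr ⟨z, Finset.mem_univ z, Set.mem_toFinset.mpr hz⟩
    calc Bad.ncard = Bad.toFinset.card := Set.ncard_eq_toFinset_card' Bad
      _ ≤ (Finset.univ.biUnion (fun z : Sym2 V => (B z).toFinset)).card :=
          Finset.card_le_card hsub
      _ ≤ ∑ z : Sym2 V, (B z).toFinset.card := Finset.card_biUnion_le
      _ = ∑ z : Sym2 V, (B z).ncard := by
          exact Finset.sum_congr rfl fun z _ => (Set.ncard_eq_toFinset_card' (B z)).symm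
  have hcount : Bad.ncard * M ≤ (Fintype.card V).choose 2 * Nat.card (ZMod M × (ι → ZMod M)) := by
    calc Bad.ncard * M ≤ (∑ z : Sym2 V, (B z).ncard) * M :=
          Nat.mul_le_mul_right M hBadle
      _ = ∑ z : Sym2 V, (B z).ncard * M := by rw [Finset.sum_mul]
      _ = ∑ z ∈ Finset.univ.filter (fun z : Sym2 V => ¬ z.IsDiag), (B z).ncard * M := by
          refine (Finset.sum_subset (Finset.filter_subset _ _) fun z _ hz => ?_).symm
          rw [Finset.mem_filter, not_and, not_not] at hz
          rw [hBdiag z (hz (Finset.mem_univ z))]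
          simp
      _ ≤ ∑ z ∈ Finset.univ.filter (fun z : Sym2 V => ¬ z.IsDiag), Nat.card (ZMod M × (ι → ZMod M)) :=
          Finset.sum_le_sum fun z _ => hBcard z
      _ = (Finset.univ.filter (fun z : Sym2 V => ¬ z.IsDiag)).card * Nat.card (ZMod M × (ι → ZMod M)) := by
          rw [Finset.sum_const, smul_eq_mul]
      _ = (Fintype.card V).choose 2 * Nat.card (ZMod M × (ι → ZMod M)) := by
          congr 1
          rw [← Fintype.card_subtype]
          exact Sym2.card_subtype_not_diag
  have hsplit : Bad.ncard + Badᶜ.ncard = Nat.card (ZMod M × (ι → ZMod M)) :=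
    Set.ncard_add_ncard_compl Bad
  rw [hGood]
  -- real arithmetic
  have hM' : (0 : ℝ) < M := by exact_mod_cast hM
  have h1 : (Bad.ncard : ℝ) * M ≤ (Fintype.card V).choose 2 * Nat.card (ZMod M × (ι → ZMod M)) := by
    exact_mod_cast hcount
  have h2 : (Badᶜ.ncard : ℝ) = (Nat.card (ZMod M × (ι → ZMod M)) : ℝ) - Bad.ncard := by
    have := hsplit
    push_cast [← this]
    ring
  have h3 : (Bad.ncard : ℝ) ≤ (Fintype.card V).choose 2 / M * Nat.card (ZMod M × (ι → ZMod M)) := by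
    rw [div_mul_eq_mul_div, le_div_iff₀ hM']
    exact h1
  rw [h2]
  have : (1 - ((Fintype.card V).choose 2 : ℝ) / M) * (Nat.card (ZMod M × (ι → ZMod M)) : ℝ)
      = (Nat.card (ZMod M × (ι → ZMod M)) : ℝ) - (Fintype.card V).choose 2 / M * Nat.card (ZMod M × (ι → ZMod M)) := by ring
  rw [this]
  linarith
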